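/- Let H be a finite-dimensional weak bialgebra over a field k. Call a finite family of nonzero subspaces H_1, …, H_k of H a decomposition of H into weak bialgebras if H = H_1 ⊕ ⋯ ⊕ H_k as a vector space, H_i H_j = 0 for all i ≠ j, H_i H_i ⊆ H_i for all i, and Δ(H_i) ⊆ H_i ⊗ H_i for all i (each H_i is then itself a weak bialgebra, with unit the H_i-component of 1 and the restricted operations); H is indecomposable if its only such decomposition is the trivial one {H}. Then: (1) H admits a decomposition H = H_1 ⊕ ⋯ ⊕ H_k into weak bialgebras with each H_i indecomposable; (2) if H_1 ⊕ ⋯ ⊕ H_k = H = H′_1 ⊕ ⋯ ⊕ H′_l are two decompositions of H into indecomposable weak bialgebras, then k = l and there is a permutation σ of {1, …, k} with H′_i = H_{σ(i)} as subspaces of H for all i. -/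

import Mathlib

open TensorProduct

noncomputable section

/-- A weak bialgebra over a field `k`: an algebra and a coalgebra structure on `H`
satisfying the weak compatibility axioms (WH1)–(WH3) of Böhm–Nill–Szlachányi. -/
class WeakBialgebra (k H : Type*) [Field k] [Ring H] [Algebra k H] [Coalgebra k H] : Prop where
  /-- (WH1) `Δ(xy) = Δ(x)Δ(y)`. -/
  comul_mul : ∀ x y : H,
    Coalgebra.comul (R := k) (x * y) = Coalgebra.comul (R := k) x * Coalgebra.comul (R := k) y
  /-- (WH2) `Δ²(1) = (Δ(1)⊗1)(1⊗Δ(1))`. -/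
  comul_one_left :
    LinearMap.rTensor H (Coalgebra.comul (R := k)) (Coalgebra.comul (R := k) (1 : H)) =
      (Coalgebra.comul (R := k) (1 : H) ⊗ₜ[k] (1 : H)) *
        (TensorProduct.assoc k H H H).symm ((1 : H) ⊗ₜ[k] Coalgebra.comul (R := k) (1 : H))
  /-- (WH2) `Δ²(1) = (1⊗Δ(1))(Δ(1)⊗1)`. -/
  comul_one_right :
    LinearMap.rTensor H (Coalgebra.comul (R := k)) (Coalgebra.comul (R := k) (1 : H)) =
      (TensorProduct.assoc k H H H).symm ((1 : H) ⊗ₜ[k] Coalgebra.comul (R := k) (1 : H)) *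
        (Coalgebra.comul (R := k) (1 : H) ⊗ₜ[k] (1 : H))
  /-- (WH3)(i) `ε(xyz) = Σ ε(x y₍₁₎) ε(y₍₂₎ z)`. -/
  counit_mul_mul : ∀ x y z : H,
    Coalgebra.counit (R := k) (x * y * z) =
      LinearMap.mul' k k (TensorProduct.map
        (Coalgebra.counit ∘ₗ LinearMap.mulLeft k x)
        (Coalgebra.counit ∘ₗ LinearMap.mulRight k z) (Coalgebra.comul (R := k) y))
  /-- (WH3)(ii) `ε(xyz) = Σ ε(x y₍₂₎) ε(y₍₁₎ z)`. -/
  counit_mul_mul' : ∀ x y z : H,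
    Coalgebra.counit (R := k) (x * y * z) =
      LinearMap.mul' k k (TensorProduct.map
        (Coalgebra.counit ∘ₗ LinearMap.mulRight k z)
        (Coalgebra.counit ∘ₗ LinearMap.mulLeft k x) (Coalgebra.comul (R := k) y))

variable (k H : Type*) [Field k] [Ring H] [Algebra k H] [Coalgebra k H]

/-- The target counital map `ε_t(x) = Σ ε(1₍₁₎ x) 1₍₂₎`. -/
def epsT : H →ₗ[k] H :=
  (TensorProduct.lid k H).toLinearMap
    ∘ₗ LinearMap.rTensor H (Coalgebra.counit ∘ₗ LinearMap.mul' k H)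
    ∘ₗ (TensorProduct.assoc k H H H).symm.toLinearMap
    ∘ₗ LinearMap.lTensor H (TensorProduct.comm k H H).toLinearMap
    ∘ₗ (TensorProduct.assoc k H H H).toLinearMap
    ∘ₗ TensorProduct.mk k (H ⊗[k] H) H (Coalgebra.comul (R := k) (1 : H))

/-- The source counital map `ε_s(x) = Σ 1₍₁₎ ε(x 1₍₂₎)`. -/
def epsS : H →ₗ[k] H :=
  (TensorProduct.lid k H).toLinearMap
    ∘ₗ LinearMap.rTensor H (Coalgebra.counit ∘ₗ LinearMap.mul' k H)
    ∘ₗ (TensorProduct.assoc k H H H).symm.toLinearMap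
    ∘ₗ LinearMap.lTensor H (TensorProduct.comm k H H).toLinearMap
    ∘ₗ (TensorProduct.mk k H (H ⊗[k] H)).flip (Coalgebra.comul (R := k) (1 : H))

/-- A finite family of nonzero subspaces `V i` of `H` is a decomposition of the weak
bialgebra `H` into weak bialgebras if `H = ⨁ᵢ V i` as a vector space, `V i · V j = 0`
for `i ≠ j`, each `V i` is closed under multiplication, and `Δ(V i) ⊆ V i ⊗ V i`. -/
def IsWeakBialgebraDecomposition {n : ℕ} (V : Fin n → Submodule k H) : Prop :=
  (∀ i, V i ≠ ⊥) ∧ DirectSum.IsInternal V ∧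
  (∀ i j, i ≠ j → ∀ x ∈ V i, ∀ y ∈ V j, x * y = 0) ∧
  (∀ i, ∀ x ∈ V i, ∀ y ∈ V i, x * y ∈ V i) ∧
  (∀ i, ∀ x ∈ V i, Coalgebra.comul (R := k) x ∈
    LinearMap.range (TensorProduct.map (V i).subtype (V i).subtype))

/-- A piece `A` is indecomposable (as a weak bialgebra) if it does not split as a direct
sum `A = B ⊕ C` of two nonzero subspaces with `B·C = C·B = 0`, each closed under
multiplication and comultiplication. -/
def PieceIndecomposable (A : Submodule k H) : Prop :=
  ¬ ∃ B C : Submodule k H, B ≠ ⊥ ∧ C ≠ ⊥ ∧ Disjoint B C ∧ B ⊔ C = A ∧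
    (∀ x ∈ B, ∀ y ∈ C, x * y = 0) ∧ (∀ x ∈ C, ∀ y ∈ B, x * y = 0) ∧
    (∀ x ∈ B, ∀ y ∈ B, x * y ∈ B) ∧ (∀ x ∈ C, ∀ y ∈ C, x * y ∈ C) ∧
    (∀ x ∈ B, Coalgebra.comul (R := k) x ∈
      LinearMap.range (TensorProduct.map B.subtype B.subtype)) ∧
    (∀ x ∈ C, Coalgebra.comul (R := k) x ∈
      LinearMap.range (TensorProduct.map C.subtype C.subtype))

section Aux

variable {k H}

/-- The image of `P ⊗ Q` in `H ⊗ H`. -/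
abbrev TT (P Q : Submodule k H) : Submodule k (H ⊗[k] H) :=
  LinearMap.range (TensorProduct.map P.subtype Q.subtype)

lemma tmul_mem_TT {P Q : Submodule k H} {p q : H} (hp : p ∈ P) (hq : q ∈ Q) :
    p ⊗ₜ[k] q ∈ TT P Q :=
  ⟨(⟨p, hp⟩ : P) ⊗ₜ[k] (⟨q, hq⟩ : Q), by simp⟩

lemma TT_mono {P P' Q Q' : Submodule k H} (h1 : P ≤ P') (h2 : Q ≤ Q') :
    TT P Q ≤ TT P' Q' := by
  show LinearMap.range (TensorProduct.map P.subtype Q.subtype) ≤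
    LinearMap.range (TensorProduct.map P'.subtype Q'.subtype)
  rw [show P.subtype = P'.subtype.comp (Submodule.inclusion h1) from
      (Submodule.subtype_comp_inclusion P P' h1).symm,
    show Q.subtype = Q'.subtype.comp (Submodule.inclusion h2) from
      (Submodule.subtype_comp_inclusion Q Q' h2).symm,
    TensorProduct.map_comp]
  exact LinearMap.range_comp_le_range _ _

lemma TT_top : (TT (⊤ : Submodule k H) (⊤ : Submodule k H)) = ⊤ := by
  rw [LinearMap.range_eq_top]
  exact TensorProduct.map_surjective
    (fun x => ⟨⟨x, trivial⟩, rfl⟩) (fun x => ⟨⟨x, trivial⟩, rfl⟩)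

lemma mul_mem_TT {P Q P' Q' R S : Submodule k H}
    (h1 : ∀ a ∈ P, ∀ c ∈ P', a * c ∈ R) (h2 : ∀ b ∈ Q, ∀ d ∈ Q', b * d ∈ S)
    {u v : H ⊗[k] H} (hu : u ∈ TT P Q) (hv : v ∈ TT P' Q') : u * v ∈ TT R S := by
  unfold TT at hu hv
  rw [TensorProduct.range_map_eq_span_tmul] at hu hv
  induction hu using Submodule.span_induction with
  | mem x hx =>
    induction hv using Submodule.span_induction with
    | mem y hy =>
      obtain ⟨m, n, rfl⟩ := hx
      obtain ⟨m', n', rfl⟩ := hy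
      rw [Submodule.subtype_apply, Submodule.subtype_apply,
        Algebra.TensorProduct.tmul_mul_tmul]
      exact tmul_mem_TT (h1 _ m.2 _ m'.2) (h2 _ n.2 _ n'.2)
    | zero => rw [mul_zero]; exact zero_mem _
    | add a b _ _ ha hb => rw [mul_add]; exact add_mem ha hb
    | smul r a _ ha => rw [mul_smul_comm]; exact Submodule.smul_mem _ r ha
  | zero => rw [zero_mul]; exact zero_mem _
  | add a b _ _ ha hb => rw [add_mul]; exact add_mem ha hb
  | smul r a _ ha => rw [smul_mul_assoc]; exact Submodule.smul_mem _ r ha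

/-- Every element of `H` decomposes as a finite sum along a spanning family. -/
lemma exists_repr {n : ℕ} {V : Fin n → Submodule k H} (hsup : ⨆ i, V i = ⊤) (x : H) :
    ∃ g : Fin n → H, (∀ j, g j ∈ V j) ∧ ∑ j, g j = x := by
  have hx : x ∈ ⨆ i, V i := hsup ▸ Submodule.mem_top
  rw [Submodule.mem_iSup_iff_exists_finsupp] at hx
  obtain ⟨f, hf, hfs⟩ := hx
  refine ⟨f, hf, ?_⟩
  rw [Finsupp.sum_fintype _ _ (fun _ => rfl)] at hfs
  exact hfs

/-- The components of `1` in a decomposition are central idempotent-like elements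
acting as local units on the pieces. -/
lemma units_spec {n : ℕ} {V : Fin n → Submodule k H}
    (hsup : ⨆ i, V i = ⊤)
    (hann : ∀ i j, i ≠ j → ∀ x ∈ V i, ∀ y ∈ V j, x * y = 0) :
    ∃ e : Fin n → H, (∀ i, e i ∈ V i) ∧ (∑ i, e i = 1) ∧
      (∀ i, ∀ x ∈ V i, e i * x = x ∧ x * e i = x) ∧
      (∀ i x, e i * x = x * e i ∧ e i * x ∈ V i) := by
  obtain ⟨e, he, hesum⟩ := exists_repr hsup 1
  have hid : ∀ i, ∀ x ∈ V i, e i * x = x ∧ x * e i = x := by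
    intro i x hx
    constructor
    · have h1 : ∑ j, e j * x = x := by rw [← Finset.sum_mul, hesum, one_mul]
      have h2 : ∑ j, e j * x = e i * x := Finset.sum_eq_single i
        (fun j _ hj => hann j i hj _ (he j) _ hx)
        (fun h => absurd (Finset.mem_univ i) h)
      exact h2.symm.trans h1
    · have h1 : ∑ j, x * e j = x := by rw [← Finset.mul_sum, hesum, mul_one]
      have h2 : ∑ j, x * e j = x * e i := Finset.sum_eq_single i
        (fun j _ hj => hann i j (Ne.symm hj) _ hx _ (he j))
        (fun h => absurd (Finset.mem_univ i) h)
      exact h2.symm.trans h1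
  refine ⟨e, he, hesum, hid, ?_⟩
  intro i x
  obtain ⟨g, hg, hgs⟩ := exists_repr hsup x
  have hL : e i * x = g i := by
    have h0 : e i * x = ∑ j, e i * g j := by rw [← Finset.mul_sum, hgs]
    have h2 : ∑ j, e i * g j = e i * g i := Finset.sum_eq_single i
      (fun j _ hj => hann i j (Ne.symm hj) _ (he i) _ (hg j))
      (fun h => absurd (Finset.mem_univ i) h)
    exact h0.trans (h2.trans (hid i _ (hg i)).1)
  have hR : x * e i = g i := by
    have h0 : x * e i = ∑ j, g j * e i := by rw [← Finset.sum_mul, hgs]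
    have h2 : ∑ j, g j * e i = g i * e i := Finset.sum_eq_single i
      (fun j _ hj => hann j i hj _ (hg j) _ (he i))
      (fun h => absurd (Finset.mem_univ i) h)
    exact h0.trans (h2.trans (hid i _ (hg i)).2)
  exact ⟨hL.trans hR.symm, hL ▸ hg i⟩

end Aux

section Main

variable {k H}

/-- Each indecomposable piece of one decomposition is contained in a piece of
any other decomposition. -/
lemma piece_le [WeakBialgebra k H] {n m : ℕ}
    {V : Fin n → Submodule k H} {W : Fin m → Submodule k H}
    (hV : IsWeakBialgebraDecomposition k H V)
    (hW : IsWeakBialgebraDecomposition k H W)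
    (hWind : ∀ j, PieceIndecomposable k H (W j)) :
    ∀ j, ∃ i, W j ≤ V i := by
  obtain ⟨hVne, hVint, hVann, hVmul, hVcomul⟩ := hV
  obtain ⟨hWne, hWint, hWann, hWmul, hWcomul⟩ := hW
  have hVsup := hVint.submodule_iSup_eq_top
  have hWsup := hWint.submodule_iSup_eq_top
  obtain ⟨e, he, hesum, heid, hec⟩ := units_spec hVsup hVann
  obtain ⟨f, hf, hfsum, hfid, hfc⟩ := units_spec hWsup hWann
  intro j
  set B : Fin n → Submodule k H := fun i => V i ⊓ W j with hBdef
  -- `W j` absorbs multiplication from the left by anything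
  have hWabs : ∀ (a : H), ∀ w ∈ W j, a * w ∈ W j := by
    intro a w hw
    have h1 : a * w = f j * (a * w) := by
      conv_lhs => rw [← (hfid j w hw).1, ← mul_assoc, ← (hfc j a).1, mul_assoc]
    rw [h1]; exact (hfc j (a * w)).2
  -- `W j` is the sup of the pieces `B i`
  have hBsup : ⨆ i, B i = W j := by
    apply le_antisymm (iSup_le fun i => inf_le_right)
    intro x hx
    have hmem : ∀ i, e i * x ∈ B i := fun i => ⟨(hec i x).2, hWabs (e i) x hx⟩
    have hxx : ∑ i, e i * x = x := by rw [← Finset.sum_mul, hesum, one_mul]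
    exact hxx ▸ sum_mem (fun i _ => Submodule.mem_iSup_of_mem i (hmem i))
  -- comultiplication restricts to each piece `B i`
  have hBcomul : ∀ i, ∀ x ∈ B i, Coalgebra.comul (R := k) x ∈ TT (B i) (B i) := by
    intro i x hx
    obtain ⟨hxV, hxW⟩ := hx
    have h1 : Coalgebra.comul (R := k) x
        = Coalgebra.comul (R := k) (e i) * Coalgebra.comul (R := k) x := by
      conv_lhs => rw [← (heid i x hxV).1]
      exact WeakBialgebra.comul_mul _ _
    have hcross : ∀ a ∈ V i, ∀ c ∈ W j, a * c ∈ B i := by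
      intro a ha c hc
      refine ⟨?_, hWabs a c hc⟩
      have h2 : a * c = a * (e i * c) := by rw [← mul_assoc, (heid i a ha).2]
      rw [h2]; exact hVmul i a ha _ (hec i c).2
    rw [h1]
    exact mul_mem_TT hcross hcross (hVcomul i (e i) (he i)) (hWcomul j x hxW)
  -- at most one piece `B i` is nonzero
  have hBone : ∀ i₁ i₂, B i₁ ≠ ⊥ → B i₂ ≠ ⊥ → i₁ = i₂ := by
    intro i₁ i₂ h1 h2
    by_contra hne
    have hBleC : ∀ i, i ≠ i₁ → B i ≤ ⨆ (i) (_ : i ≠ i₁), B i :=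
      fun i hi => le_iSup₂ (f := fun i (_ : i ≠ i₁) => B i) i hi
    have hCmem : (⨆ (i) (_ : i ≠ i₁), B i) ≠ ⊥ :=
      fun hC => h2 (le_bot_iff.mp (hC ▸ hBleC i₂ (Ne.symm hne)))
    have hekill : ∀ y ∈ (⨆ (i) (_ : i ≠ i₁), B i), e i₁ * y = 0 := by
      have hle : (⨆ (i) (_ : i ≠ i₁), B i) ≤
          Submodule.comap (LinearMap.mulLeft k (e i₁)) ⊥ := by
        refine iSup₂_le fun i hi y hy => ?_
        simp only [Submodule.mem_comap, Submodule.mem_bot, LinearMap.mulLeft_apply]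
        exact hVann i₁ i (Ne.symm hi) _ (he i₁) _ hy.1
      intro y hy
      simpa using hle hy
    apply hWind j
    refine ⟨B i₁, ⨆ (i) (_ : i ≠ i₁), B i, h1, hCmem, ?_, ?_, ?_, ?_, ?_, ?_, ?_, ?_⟩
    · rw [Submodule.disjoint_def]
      intro x hx1 hxC
      rw [← (heid i₁ x hx1.1).1]
      exact hekill x hxC
    · rw [← hBsup]
      apply le_antisymm
      · exact sup_le (le_iSup B i₁) (iSup₂_le fun i _ => le_iSup B i)
      · refine iSup_le fun i => ?_
        by_cases h : i = i₁
        · subst h; exact le_sup_left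
        · exact le_sup_of_le_right (hBleC i h)
    · intro x hx y hy
      rw [← (heid i₁ x hx.1).2, mul_assoc, hekill y hy, mul_zero]
    · intro y hy x hx
      rw [← (heid i₁ x hx.1).1, ← mul_assoc, ← (hec i₁ y).1, hekill y hy, zero_mul]
    · exact fun x hx y hy => ⟨hVmul i₁ _ hx.1 _ hy.1, hWmul j _ hx.2 _ hy.2⟩
    · -- C closed under multiplication
      have hstep : ∀ i, i ≠ i₁ → ∀ x ∈ B i, ∀ y ∈ (⨆ (i) (_ : i ≠ i₁), B i),
          x * y ∈ (⨆ (i) (_ : i ≠ i₁), B i) := by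
        intro i hi x hx
        have hle : (⨆ (i) (_ : i ≠ i₁), B i) ≤
            Submodule.comap (LinearMap.mulLeft k x) (⨆ (i) (_ : i ≠ i₁), B i) := by
          refine iSup₂_le fun i' hi' y hy => ?_
          simp only [Submodule.mem_comap, LinearMap.mulLeft_apply]
          by_cases h : i' = i
          · subst h
            exact hBleC i' hi' ⟨hVmul i' _ hx.1 _ hy.1, hWmul j _ hx.2 _ hy.2⟩
          · rw [hVann i i' (fun hh => h hh.symm) _ hx.1 _ hy.1]
            exact zero_mem _
        exact fun y hy => hle hy
      intro x hx y hy
      have hle : (⨆ (i) (_ : i ≠ i₁), B i) ≤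
          Submodule.comap (LinearMap.mulRight k y) (⨆ (i) (_ : i ≠ i₁), B i) := by
        refine iSup₂_le fun i hi x' hx' => ?_
        simp only [Submodule.mem_comap, LinearMap.mulRight_apply]
        exact hstep i hi x' hx' y hy
      exact hle hx
    · exact hBcomul i₁
    · intro x hx
      have hle : (⨆ (i) (_ : i ≠ i₁), B i) ≤
          Submodule.comap (Coalgebra.comul (R := k) : H →ₗ[k] H ⊗[k] H)
            (TT (⨆ (i) (_ : i ≠ i₁), B i) (⨆ (i) (_ : i ≠ i₁), B i)) := by
        refine iSup₂_le fun i hi y hy => ?_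
        simp only [Submodule.mem_comap]
        exact TT_mono (hBleC i hi) (hBleC i hi) (hBcomul i y hy)
      exact hle hx
  -- conclude
  have hex : ∃ i₀, B i₀ ≠ ⊥ := by
    by_contra hall
    push_neg at hall
    exact hWne j (hBsup.symm.trans (iSup_eq_bot.mpr hall))
  obtain ⟨i₀, hi₀⟩ := hex
  refine ⟨i₀, ?_⟩
  rw [← hBsup]
  refine iSup_le fun i => ?_
  by_cases h : B i = ⊥
  · rw [h]; exact bot_le
  · rw [hBone i i₀ h hi₀]; exact inf_le_left

/-- Uniqueness of the decomposition into indecomposables. -/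
lemma uniq_dec [WeakBialgebra k H] {n m : ℕ}
    {V : Fin n → Submodule k H} {W : Fin m → Submodule k H}
    (hV : IsWeakBialgebraDecomposition k H V) (hVind : ∀ i, PieceIndecomposable k H (V i))
    (hW : IsWeakBialgebraDecomposition k H W) (hWind : ∀ i, PieceIndecomposable k H (W i)) :
    n = m ∧ ∃ σ : Fin m ≃ Fin n, ∀ i, W i = V (σ i) := by
  choose σ' hσ' using piece_le hV hW hWind
  choose τ hτ using piece_le hW hV hVind
  have hWdisj : Pairwise (Function.onFun Disjoint W) := hW.2.1.submodule_iSupIndep.pairwiseDisjoint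
  have hVdisj : Pairwise (Function.onFun Disjoint V) := hV.2.1.submodule_iSupIndep.pairwiseDisjoint
  have hts : ∀ j, τ (σ' j) = j := by
    intro j
    by_contra hne
    have hle : W j ≤ W (τ (σ' j)) := (hσ' j).trans (hτ (σ' j))
    exact hW.1 j ((hWdisj (fun h => hne h.symm)).eq_bot_of_le hle)
  have hst : ∀ i, σ' (τ i) = i := by
    intro i
    by_contra hne
    have hle : V i ≤ V (σ' (τ i)) := (hτ i).trans (hσ' (τ i))
    exact hV.1 i ((hVdisj (fun h => hne h.symm)).eq_bot_of_le hle)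
  have hWV : ∀ j, W j = V (σ' j) := by
    intro j
    refine le_antisymm (hσ' j) ?_
    have h1 := hτ (σ' j)
    rw [hts j] at h1
    exact h1
  exact ⟨Fin.equiv_iff_eq.mp ⟨⟨τ, σ', hst, hts⟩⟩, ⟨⟨σ', τ, hts, hst⟩, hWV⟩⟩

/-- Existence of a decomposition into indecomposables, by induction on dimension. -/
lemma exists_dec [WeakBialgebra k H] [FiniteDimensional k H] :
    ∀ (d : ℕ) (A : Submodule k H), Module.finrank k A ≤ d →
    (∀ x ∈ A, ∀ y ∈ A, x * y ∈ A) →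
    (∀ x ∈ A, Coalgebra.comul (R := k) x ∈ TT A A) →
    (∃ e ∈ A, ∀ x ∈ A, e * x = x ∧ x * e = x) →
    ∃ (n : ℕ) (V : Fin n → Submodule k H),
      (∀ i, V i ≠ ⊥) ∧ (∀ i, V i ≤ A) ∧ (⨆ i, V i = A) ∧
      (∀ i j, i ≠ j → ∀ x ∈ V i, ∀ y ∈ V j, x * y = 0) ∧
      (∀ i, ∀ x ∈ V i, ∀ y ∈ V i, x * y ∈ V i) ∧
      (∀ i, ∀ x ∈ V i, Coalgebra.comul (R := k) x ∈ TT (V i) (V i)) ∧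
      (∀ i, ∃ e ∈ V i, ∀ x ∈ V i, e * x = x ∧ x * e = x) ∧
      (∀ i, PieceIndecomposable k H (V i)) := by
  intro d
  induction d with
  | zero =>
    intro A hr _ _ _
    have hA : A = ⊥ := Submodule.finrank_eq_zero.mp (Nat.le_zero.mp hr)
    exact ⟨0, Fin.elim0, fun i => i.elim0, fun i => i.elim0,
      by rw [hA]; exact iSup_of_empty _, fun i => i.elim0, fun i => i.elim0,
      fun i => i.elim0, fun i => i.elim0, fun i => i.elim0⟩
  | succ d ih =>
    intro A hr hmul hcomul hunit
    by_cases hA : A = ⊥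
    · exact ⟨0, Fin.elim0, fun i => i.elim0, fun i => i.elim0,
        by rw [hA]; exact iSup_of_empty _, fun i => i.elim0, fun i => i.elim0,
        fun i => i.elim0, fun i => i.elim0, fun i => i.elim0⟩
    by_cases hind : PieceIndecomposable k H A
    · exact ⟨1, fun _ => A, fun _ => hA, fun _ => le_rfl, iSup_const,
        fun i j hij => absurd (Subsingleton.elim i j) hij,
        fun _ => hmul, fun _ => hcomul, fun _ => hunit, fun _ => hind⟩
    · obtain ⟨B, C, hB0, hC0, hdisj, hBC, hBCz, hCBz, hBm, hCm, hBco, hCco⟩ :=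
        not_not.mp hind
      have hBle : B ≤ A := hBC ▸ le_sup_left
      have hCle : C ≤ A := hBC ▸ le_sup_right
      have hBlt : B < A :=
        lt_of_le_of_ne hBle (fun h => hC0 (hdisj.symm.eq_bot_of_le (h ▸ hCle)))
      have hClt : C < A :=
        lt_of_le_of_ne hCle (fun h => hB0 (hdisj.eq_bot_of_le (h ▸ hBle)))
      have hrB : Module.finrank k B ≤ d :=
        Nat.lt_succ_iff.mp (lt_of_lt_of_le (Submodule.finrank_lt_finrank_of_lt hBlt) hr)
      have hrC : Module.finrank k C ≤ d :=
        Nat.lt_succ_iff.mp (lt_of_lt_of_le (Submodule.finrank_lt_finrank_of_lt hClt) hr)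
      obtain ⟨e, heA, he⟩ := hunit
      obtain ⟨b, hb, c, hc, hbc⟩ := Submodule.mem_sup.mp (show e ∈ B ⊔ C from hBC ▸ heA)
      have hbu : ∀ x ∈ B, b * x = x ∧ x * b = x := by
        intro x hx
        constructor
        · have h2 : b * x + c * x = x := by rw [← add_mul, hbc, (he x (hBle hx)).1]
          rwa [hCBz c hc x hx, add_zero] at h2
        · have h2 : x * b + x * c = x := by rw [← mul_add, hbc, (he x (hBle hx)).2]
          rwa [hBCz x hx c hc, add_zero] at h2
      have hcu : ∀ x ∈ C, c * x = x ∧ x * c = x := by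
        intro x hx
        constructor
        · have h2 : b * x + c * x = x := by rw [← add_mul, hbc, (he x (hCle hx)).1]
          rwa [hBCz b hb x hx, zero_add] at h2
        · have h2 : x * b + x * c = x := by rw [← mul_add, hbc, (he x (hCle hx)).2]
          rwa [hCBz x hx b hb, zero_add] at h2
      obtain ⟨n₁, V₁, hne₁, hle₁, hsup₁, hann₁, hmul₁, hco₁, hu₁, hind₁⟩ :=
        ih B hrB hBm hBco ⟨b, hb, hbu⟩
      obtain ⟨n₂, V₂, hne₂, hle₂, hsup₂, hann₂, hmul₂, hco₂, hu₂, hind₂⟩ :=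
        ih C hrC hCm hCco ⟨c, hc, hcu⟩
      refine ⟨n₁ + n₂, fun i => Sum.elim V₁ V₂ (finSumFinEquiv.symm i),
        ?_, ?_, ?_, ?_, ?_, ?_, ?_, ?_⟩
      · intro i
        rcases h : finSumFinEquiv.symm i with a | a <;> simp only [h, Sum.elim_inl, Sum.elim_inr]
        · exact hne₁ a
        · exact hne₂ a
      · intro i
        rcases h : finSumFinEquiv.symm i with a | a <;> simp only [h, Sum.elim_inl, Sum.elim_inr]
        · exact (hle₁ a).trans hBle
        · exact (hle₂ a).trans hCle
      · rw [Equiv.iSup_comp (e := finSumFinEquiv.symm) (g := Sum.elim V₁ V₂), iSup_sum]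
        simp only [Sum.elim_inl, Sum.elim_inr]
        rw [hsup₁, hsup₂, hBC]
      · intro i j hij x hx y hy
        have hinj : finSumFinEquiv.symm i ≠ finSumFinEquiv.symm j :=
          fun hh => hij (finSumFinEquiv.symm.injective hh)
        rcases h1 : finSumFinEquiv.symm i with a | a <;>
          rcases h2 : finSumFinEquiv.symm j with a' | a' <;>
          simp only [h1, Sum.elim_inl, Sum.elim_inr] at hx <;>
          simp only [h2, Sum.elim_inl, Sum.elim_inr] at hy
        · refine hann₁ a a' (fun hh => hinj ?_) x hx y hy
          rw [h1, h2, hh]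
        · exact hBCz x (hle₁ a hx) y (hle₂ a' hy)
        · exact hCBz x (hle₂ a hx) y (hle₁ a' hy)
        · refine hann₂ a a' (fun hh => hinj ?_) x hx y hy
          rw [h1, h2, hh]
      · intro i
        rcases h : finSumFinEquiv.symm i with a | a <;> simp only [h, Sum.elim_inl, Sum.elim_inr]
        · exact hmul₁ a
        · exact hmul₂ a
      · intro i
        rcases h : finSumFinEquiv.symm i with a | a <;> simp only [h, Sum.elim_inl, Sum.elim_inr]
        · exact hco₁ a
        · exact hco₂ a
      · intro i
        rcases h : finSumFinEquiv.symm i with a | a <;> simp only [h, Sum.elim_inl, Sum.elim_inr]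
        · exact hu₁ a
        · exact hu₂ a
      · intro i
        rcases h : finSumFinEquiv.symm i with a | a <;> simp only [h, Sum.elim_inl, Sum.elim_inr]
        · exact hind₁ a
        · exact hind₂ a

end Main

/-- A finite-dimensional weak bialgebra decomposes into finitely many indecomposable
weak bialgebras, uniquely up to permutation. -/
theorem exists_unique_decomposition_into_indecomposables
    [WeakBialgebra k H] [FiniteDimensional k H] :
    (∃ (n : ℕ) (V : Fin n → Submodule k H),
      IsWeakBialgebraDecomposition k H V ∧ ∀ i, PieceIndecomposable k H (V i)) ∧
    (∀ (n m : ℕ) (V : Fin n → Submodule k H) (W : Fin m → Submodule k H),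
      IsWeakBialgebraDecomposition k H V → (∀ i, PieceIndecomposable k H (V i)) →
      IsWeakBialgebraDecomposition k H W → (∀ i, PieceIndecomposable k H (W i)) →
      n = m ∧ ∃ σ : Fin m ≃ Fin n, ∀ i, W i = V (σ i)) := by
  constructor
  · obtain ⟨n, V, hne, hle, hsup, hann, hmul, hco, hu, hind⟩ :=
      exists_dec (k := k) (H := H) (Module.finrank k H) ⊤ (by rw [finrank_top])
        (fun _ _ _ _ => trivial)
        (fun x _ => by rw [TT_top]; exact Submodule.mem_top)
        ⟨1, trivial, fun x _ => ⟨one_mul x, mul_one x⟩⟩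
    refine ⟨n, V, ⟨hne, ?_, hann, hmul, hco⟩, hind⟩
    apply DirectSum.isInternal_submodule_of_iSupIndep_of_iSup_eq_top ?_ hsup
    rw [iSupIndep_def]
    intro i
    rw [Submodule.disjoint_def]
    intro x hxi hxs
    obtain ⟨e, hei, heu⟩ := hu i
    have hkill : (⨆ j, ⨆ _ : j ≠ i, V j) ≤ Submodule.comap (LinearMap.mulLeft k e) ⊥ := by
      refine iSup₂_le fun j hj y hy => ?_
      simp only [Submodule.mem_comap, Submodule.mem_bot, LinearMap.mulLeft_apply]
      exact hann i j (Ne.symm hj) e hei y hy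
    have h0 : e * x = 0 := by simpa using hkill hxs
    rw [← (heu x hxi).1, h0]
  · intro n m V W hV hVind hW hWind
    exact uniq_dec hV hVind hW hWind
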